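/- Under the conformal prediction setup with almost surely distinct scores, the coverage probability also satisfies the upper bound Pr(Y_test ∈ C(X_test)) ≤ 1 − α + 1/(N+1). -/

import Mathlib

namespace ConformalUB

noncomputable def rk {n : ℕ} (w : Fin n → ℝ) (i : Fin n) : ℕ :=
  (Finset.univ.filter fun j => w j ≤ w i).card

lemma rk_pos {n : ℕ} (w : Fin n → ℝ) (i : Fin n) : 1 ≤ rk w i :=
  Finset.card_pos.mpr ⟨i, Finset.mem_filter.mpr ⟨Finset.mem_univ i, le_refl _⟩⟩

lemma rk_le {n : ℕ} (w : Fin n → ℝ) (i : Fin n) : rk w i ≤ n :=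
  le_trans (Finset.card_filter_le _ _) (by simp)

lemma rk_lt {n : ℕ} {w : Fin n → ℝ} {i j : Fin n} (h : w i < w j) : rk w i < rk w j := by
  apply Finset.card_lt_card
  rw [Finset.ssubset_def]
  constructor
  · intro x hx
    rw [Finset.mem_filter] at hx ⊢
    exact ⟨hx.1, le_trans hx.2 h.le⟩
  · intro hsub
    have hj := hsub (Finset.mem_filter.mpr ⟨Finset.mem_univ j, le_refl _⟩)
    exact absurd (Finset.mem_filter.mp hj).2 (not_le.mpr h)

lemma rk_inj {n : ℕ} {w : Fin n → ℝ} (hw : Function.Injective w) :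
    Function.Injective (rk w) := by
  intro i j hij
  by_contra hne
  have hwne : w i ≠ w j := fun h => hne (hw h)
  rcases lt_or_gt_of_ne hwne with h | h
  · exact absurd hij (rk_lt h).ne
  · exact absurd hij.symm (rk_lt h).ne

lemma rk_surj {n : ℕ} {w : Fin n → ℝ} (hw : Function.Injective w) {r : ℕ}
    (h1 : 1 ≤ r) (h2 : r ≤ n) : ∃ i, rk w i = r := by
  have himg : Finset.image (rk w) Finset.univ = Finset.Icc 1 n := by
    apply Finset.eq_of_subset_of_card_le
    · intro x hx
      rw [Finset.mem_image] at hx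
      obtain ⟨i, _, rfl⟩ := hx
      exact Finset.mem_Icc.mpr ⟨rk_pos w i, rk_le w i⟩
    · rw [Nat.card_Icc, Finset.card_image_of_injective _ (rk_inj hw)]
      simp
  have : r ∈ Finset.image (rk w) Finset.univ := by
    rw [himg]; exact Finset.mem_Icc.mpr ⟨h1, h2⟩
  obtain ⟨i, _, hi⟩ := Finset.mem_image.mp this
  exact ⟨i, hi⟩

lemma card_filter_perm {n : ℕ} (σ : Equiv.Perm (Fin n)) (p : Fin n → Prop) [DecidablePred p] :
    (Finset.univ.filter fun i => p (σ i)).card = (Finset.univ.filter p).card := by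
  have himg : Finset.image σ (Finset.univ.filter fun i => p (σ i)) = Finset.univ.filter p := by
    ext j
    simp only [Finset.mem_image, Finset.mem_filter, Finset.mem_univ, true_and]
    constructor
    · rintro ⟨i, hi, rfl⟩; exact hi
    · intro hj; exact ⟨σ.symm j, by simpa using hj, by simp⟩
  rw [← himg, Finset.card_image_of_injective _ σ.injective]

lemma count_lt_le {n : ℕ} {g : Fin n → ℝ} (hg : Monotone g) (m : Fin n) {x : ℝ}
    (hx : x ≤ g m) : (Finset.univ.filter fun i => g i < x).card ≤ (m : ℕ) := by
  have hsub : (Finset.univ.filter fun i => g i < x) ⊆ Finset.Iio m := by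
    intro i hi
    rw [Finset.mem_filter] at hi
    rw [Finset.mem_Iio]
    by_contra h
    push_neg at h
    exact absurd (hg h) (not_le.mpr (lt_of_lt_of_le hi.2 hx))
  calc (Finset.univ.filter fun i => g i < x).card ≤ (Finset.Iio m).card :=
        Finset.card_le_card hsub
    _ = (m : ℕ) := Fin.card_Iio m

lemma det_lemma {N k : ℕ} (hk1 : 1 ≤ k) (hkN : k ≤ N)
    (w : Fin (N + 1) → ℝ) (hw : Function.Injective w)
    (hle : w (Fin.last N) ≤
      (fun i : Fin N => w i.castSucc)
        (Tuple.sort (fun i : Fin N => w i.castSucc) ⟨k - 1, by omega⟩)) :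
    rk w (Fin.last N) ≤ k := by
  set u : Fin N → ℝ := fun i => w i.castSucc with hu
  set σ := Tuple.sort u with hσ
  have hmono : Monotone fun i => u (σ i) := Tuple.monotone_sort u
  have hm : k - 1 < N := by omega
  have hle' : w (Fin.last N) ≤ u (σ ⟨k - 1, hm⟩) := hle
  have hA : (Finset.univ.filter fun i => u (σ i) < w (Fin.last N)).card ≤ k - 1 := by
    simpa using count_lt_le hmono ⟨k - 1, hm⟩ hle'
  have hB : (Finset.univ.filter fun i => u (σ i) < w (Fin.last N)).card
      = (Finset.univ.filter fun j => u j < w (Fin.last N)).card :=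
    card_filter_perm σ (fun j => u j < w (Fin.last N))
  have hC : (Finset.univ.filter fun j => u j < w (Fin.last N))
      = (Finset.univ.filter fun j => u j ≤ w (Fin.last N)) := by
    apply Finset.filter_congr
    intro j _
    have hne : u j ≠ w (Fin.last N) := fun h => absurd (hw h) (Fin.castSucc_lt_last j).ne
    simp [lt_iff_le_and_ne, hne]
  have hD : rk w (Fin.last N)
      = (Finset.univ.filter fun j : Fin N => u j ≤ w (Fin.last N)).card + 1 := by
    unfold rk
    rw [Finset.card_filter, Finset.card_filter, Fin.sum_univ_castSucc]
    simp [hu]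
  have hC2 := congrArg Finset.card hC
  omega

end ConformalUB
open MeasureTheory ProbabilityTheory ENNReal in
/-- **Conformal coverage guarantee (upper bound)** under almost surely distinct scores. -/
theorem conformal_coverage_upper_bound
    {Ω 𝒳 𝒴 : Type*} [MeasureSpace Ω] [IsProbabilityMeasure (ℙ : Measure Ω)]
    [MeasurableSpace 𝒳] [MeasurableSpace 𝒴]
    (N : ℕ) (hN : 0 < N)
    (X : Fin (N + 1) → Ω → 𝒳) (Y : Fin (N + 1) → Ω → 𝒴)
    (hX : ∀ i, Measurable (X i)) (hY : ∀ i, Measurable (Y i))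
    (s : 𝒳 → 𝒴 → ℝ) (hs : Measurable (fun p : 𝒳 × 𝒴 => s p.1 p.2))
    (hexch : ∀ π : Equiv.Perm (Fin (N + 1)),
      Measure.map (fun ω i => (X (π i) ω, Y (π i) ω)) (ℙ : Measure Ω)
        = Measure.map (fun ω i => (X i ω, Y i ω)) (ℙ : Measure Ω))
    -- the N+1 scores are almost surely distinct (no ties)
    (hdistinct : ∀ i j : Fin (N + 1), i ≠ j →
      (ℙ : Measure Ω) {ω | s (X i ω) (Y i ω) = s (X j ω) (Y j ω)} = 0)
    (α : ℝ) (hα : α ∈ Set.Ioo (0 : ℝ) 1)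
    (k : ℕ) (hk : (k : ℤ) = ⌈((N : ℝ) + 1) * (1 - α)⌉)
    (hk1 : 1 ≤ k) (hkN : k ≤ N)
    (qhat : Ω → ℝ)
    (hq : ∀ ω, qhat ω =
      (fun i : Fin N => s (X i.castSucc ω) (Y i.castSucc ω))
        (Tuple.sort (fun i : Fin N => s (X i.castSucc ω) (Y i.castSucc ω))
          ⟨k - 1, by omega⟩)) :
    (ℙ : Measure Ω) {ω | s (X (Fin.last N) ω) (Y (Fin.last N) ω) ≤ qhat ω}
      ≤ ENNReal.ofReal (1 - α + 1 / ((N : ℝ) + 1)) := by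
  classical
  set S : Fin (N + 1) → Ω → ℝ := fun i ω => s (X i ω) (Y i ω) with hS
  have hSm : ∀ i, Measurable (S i) := fun i => hs.comp ((hX i).prodMk (hY i))
  -- the score-vector-valued random variable
  set v : Ω → (Fin (N + 1) → 𝒳 × 𝒴) := fun ω j => (X j ω, Y j ω) with hv
  have hvm : Measurable v := measurable_pi_lambda _ fun j => (hX j).prodMk (hY j)
  -- rank functionals on tuples
  set F : Fin (N + 1) → (Fin (N + 1) → 𝒳 × 𝒴) → ℕ :=
    fun i u => ConformalUB.rk (fun j => s (u j).1 (u j).2) i with hF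
  have hFm : ∀ i, Measurable (F i) := by
    intro i
    have hrw : F i = fun u => ∑ j : Fin (N + 1),
        if s (u j).1 (u j).2 ≤ s (u i).1 (u i).2 then 1 else 0 := by
      funext u
      show ConformalUB.rk (fun j => s (u j).1 (u j).2) i = _
      unfold ConformalUB.rk
      rw [Finset.card_filter]
    rw [hrw]
    apply Finset.measurable_sum
    intro j _
    exact Measurable.ite
      (measurableSet_le (hs.comp (measurable_pi_apply j)) (hs.comp (measurable_pi_apply i)))
      measurable_const measurable_const
  -- ranks of each score
  set R : Fin (N + 1) → Ω → ℕ := fun i ω => ConformalUB.rk (fun j => S j ω) i with hR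
  have hRm : ∀ i r, MeasurableSet {ω | R i ω = r} := by
    intro i r
    exact hvm ((hFm i) (measurableSet_singleton r))
  -- exchangeability: all ranks have the same distribution
  have key : ∀ (i : Fin (N + 1)) (r : ℕ),
      ℙ {ω | R i ω = r} = ℙ {ω | R (Fin.last N) ω = r} := by
    intro i r
    set π : Equiv.Perm (Fin (N + 1)) := Equiv.swap (Fin.last N) i with hπ
    have hvπ : Measurable (fun ω (j : Fin (N + 1)) => (X (π j) ω, Y (π j) ω)) :=
      measurable_pi_lambda _ fun j => (hX _).prodMk (hY _)
    have hms : MeasurableSet (F (Fin.last N) ⁻¹' {r}) :=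
      (hFm _) (measurableSet_singleton r)
    have h1 : ℙ {ω | R (Fin.last N) ω = r}
        = (Measure.map v ℙ) (F (Fin.last N) ⁻¹' {r}) := by
      rw [Measure.map_apply hvm hms]
      rfl
    have h2 : (Measure.map (fun ω (j : Fin (N + 1)) => (X (π j) ω, Y (π j) ω)) ℙ)
          (F (Fin.last N) ⁻¹' {r})
        = ℙ {ω | F (Fin.last N) (fun j => (X (π j) ω, Y (π j) ω)) = r} := by
      rw [Measure.map_apply hvπ hms]
      rfl
    have h3 : ∀ ω, F (Fin.last N) (fun j => (X (π j) ω, Y (π j) ω)) = R (π (Fin.last N)) ω := by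
      intro ω
      show ConformalUB.rk (fun j => S (π j) ω) (Fin.last N)
        = ConformalUB.rk (fun j => S j ω) (π (Fin.last N))
      unfold ConformalUB.rk
      exact ConformalUB.card_filter_perm π (fun j => S j ω ≤ S (π (Fin.last N)) ω)
    have h4 : π (Fin.last N) = i := Equiv.swap_apply_left _ _
    rw [h1, ← hexch π, h2]
    simp only [h3, h4]
  -- the a.s. set of distinct scores
  set D : Set Ω := {ω | Function.Injective fun i => S i ω} with hD
  have hDm : MeasurableSet D := by
    have hDeq : D = ⋂ (i) (j) (_ : i ≠ j), {ω | S i ω ≠ S j ω} := by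
      ext ω
      simp only [hD, Set.mem_setOf_eq, Set.mem_iInter]
      constructor
      · intro h i j hij heq
        exact hij (h heq)
      · intro h a b hab
        by_contra hne
        exact h a b hne hab
    rw [hDeq]
    exact MeasurableSet.iInter fun i => MeasurableSet.iInter fun j =>
      MeasurableSet.iInter fun _ => (measurableSet_eq_fun (hSm i) (hSm j)).compl
  have hDc : ℙ Dᶜ = 0 := by
    have hsub : Dᶜ ⊆ ⋃ (i) (j), {ω | i ≠ j ∧ S i ω = S j ω} := by
      intro ω hω
      simp only [hD, Set.mem_compl_iff, Set.mem_setOf_eq] at hω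
      rw [Function.not_injective_iff] at hω
      obtain ⟨a, b, hab, hne⟩ := hω
      exact Set.mem_iUnion.mpr ⟨a, Set.mem_iUnion.mpr ⟨b, hne, hab⟩⟩
    refine measure_mono_null hsub
      (measure_iUnion_null fun i => measure_iUnion_null fun j => ?_)
    by_cases hij : i = j
    · subst hij
      have h0 : {ω | i ≠ i ∧ S i ω = S i ω} = ∅ := by
        ext ω
        simp only [ne_eq, not_true_eq_false, false_and, Set.setOf_false,
          Set.mem_empty_iff_false]
      rw [h0]
      exact measure_empty
    · exact measure_mono_null (fun ω h => h.2) (hdistinct i j hij)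
  have hD1 : ℙ D = 1 := by
    exact (prob_compl_eq_zero_iff (μ := (ℙ : MeasureTheory.Measure Ω)) hDm).mp hDc
  -- each rank value in [1, N+1] has probability 1/(N+1)
  have hpr : ∀ r : ℕ, 1 ≤ r → r ≤ N + 1 →
      ℙ {ω | R (Fin.last N) ω = r} = (((N + 1 : ℕ) : ℝ≥0∞))⁻¹ := by
    intro r hr1 hr2
    have hcover : (⋃ i ∈ (Finset.univ : Finset (Fin (N + 1))), ({ω | R i ω = r} ∩ D)) = D := by
      ext ω
      simp only [Set.mem_iUnion, Finset.mem_univ, Set.mem_inter_iff, Set.mem_setOf_eq,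
        exists_prop, true_and]
      constructor
      · rintro ⟨i, _, hωD⟩; exact hωD
      · intro hωD
        obtain ⟨i, hi⟩ := ConformalUB.rk_surj hωD hr1 hr2
        exact ⟨i, hi, hωD⟩
    have hdisj : Set.PairwiseDisjoint
        ((Finset.univ : Finset (Fin (N + 1))) : Set (Fin (N + 1)))
        (fun i => {ω | R i ω = r} ∩ D) := by
      intro i _ j _ hij
      rw [Function.onFun, Set.disjoint_left]
      rintro ω ⟨hωi, hωD⟩ ⟨hωj, _⟩
      exact hij (ConformalUB.rk_inj hωD (hωi.trans hωj.symm))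
    have hmeas : ∀ i ∈ (Finset.univ : Finset (Fin (N + 1))),
        MeasurableSet ({ω | R i ω = r} ∩ D) := fun i _ => (hRm i r).inter hDm
    have hsum : ∑ i : Fin (N + 1), ℙ ({ω | R i ω = r} ∩ D) = 1 := by
      rw [← measure_biUnion_finset hdisj hmeas, hcover, hD1]
    have hinter : ∀ i : Fin (N + 1), ℙ ({ω | R i ω = r} ∩ D) = ℙ {ω | R i ω = r} := by
      intro i
      refine le_antisymm (measure_mono Set.inter_subset_left) ?_
      calc ℙ {ω | R i ω = r} ≤ ℙ (({ω | R i ω = r} ∩ D) ∪ Dᶜ) := by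
            refine measure_mono ?_
            intro ω h
            by_cases hω : ω ∈ D
            · exact Or.inl ⟨h, hω⟩
            · exact Or.inr hω
        _ ≤ ℙ ({ω | R i ω = r} ∩ D) + ℙ Dᶜ := measure_union_le _ _
        _ = ℙ ({ω | R i ω = r} ∩ D) := by rw [hDc, add_zero]
    have hsum' : ∑ i : Fin (N + 1), ℙ {ω | R (Fin.last N) ω = r} = 1 := by
      rw [← hsum]
      exact Finset.sum_congr rfl fun i _ => by rw [hinter i, key i r]
    rw [Finset.sum_const, Finset.card_univ, Fintype.card_fin, nsmul_eq_mul] at hsum'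
    have hne : ((N + 1 : ℕ) : ℝ≥0∞) ≠ 0 := by simp
    have hnt : ((N + 1 : ℕ) : ℝ≥0∞) ≠ ⊤ := by simp
    calc ℙ {ω | R (Fin.last N) ω = r}
        = (((N + 1 : ℕ) : ℝ≥0∞))⁻¹ * (((N + 1 : ℕ) : ℝ≥0∞) * ℙ {ω | R (Fin.last N) ω = r}) := by
          rw [← mul_assoc, ENNReal.inv_mul_cancel hne hnt, one_mul]
      _ = (((N + 1 : ℕ) : ℝ≥0∞))⁻¹ := by rw [hsum', mul_one]
  -- the coverage event is (a.s.) contained in {rank of last ≤ k}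
  have hsubset : {ω | s (X (Fin.last N) ω) (Y (Fin.last N) ω) ≤ qhat ω}
      ⊆ {ω | R (Fin.last N) ω ≤ k} ∪ Dᶜ := by
    intro ω hω
    by_cases hωD : ω ∈ D
    · left
      simp only [Set.mem_setOf_eq] at hω ⊢
      refine ConformalUB.det_lemma hk1 hkN (fun i => S i ω) hωD ?_
      have := hq ω
      rw [this] at hω
      exact hω
    · exact Or.inr hωD
  -- assemble
  calc ℙ {ω | s (X (Fin.last N) ω) (Y (Fin.last N) ω) ≤ qhat ω}
      ≤ ℙ ({ω | R (Fin.last N) ω ≤ k} ∪ Dᶜ) := measure_mono hsubset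
    _ ≤ ℙ {ω | R (Fin.last N) ω ≤ k} + ℙ Dᶜ := measure_union_le _ _
    _ = ℙ {ω | R (Fin.last N) ω ≤ k} := by rw [hDc, add_zero]
    _ ≤ ∑ r ∈ Finset.Icc 1 k, ℙ {ω | R (Fin.last N) ω = r} := by
        refine le_trans (measure_mono ?_) (measure_biUnion_finset_le _ _)
        intro ω h
        simp only [Set.mem_setOf_eq] at h
        exact Set.mem_biUnion
          (Finset.mem_Icc.mpr ⟨ConformalUB.rk_pos _ _, h⟩) rfl
    _ = (k : ℝ≥0∞) * (((N + 1 : ℕ) : ℝ≥0∞))⁻¹ := by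
        rw [Finset.sum_congr rfl fun r hr => hpr r (Finset.mem_Icc.mp hr).1
          (le_trans (Finset.mem_Icc.mp hr).2 (by omega)),
          Finset.sum_const, Nat.card_Icc, nsmul_eq_mul]
        norm_num
    _ ≤ ENNReal.ofReal (1 - α + 1 / ((N : ℝ) + 1)) := by
        have hpos : (0 : ℝ) < (N : ℝ) + 1 := by positivity
        have hkr : (k : ℝ) < ((N : ℝ) + 1) * (1 - α) + 1 := by
          have h := Int.ceil_lt_add_one (((N : ℝ) + 1) * (1 - α))
          rw [← hk] at h
          exact_mod_cast h
        have heq : (k : ℝ≥0∞) * (((N + 1 : ℕ) : ℝ≥0∞))⁻¹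
            = ENNReal.ofReal ((k : ℝ) / ((N : ℝ) + 1)) := by
          rw [ENNReal.ofReal_div_of_pos hpos, ENNReal.ofReal_natCast,
            show ((N : ℝ) + 1) = ((N + 1 : ℕ) : ℝ) by push_cast; ring,
            ENNReal.ofReal_natCast]
          rfl
        rw [heq]
        apply ENNReal.ofReal_le_ofReal
        rw [div_le_iff₀ hpos]
        have hne' : (N : ℝ) + 1 ≠ 0 := ne_of_gt hpos
        have hexp : (1 - α + 1 / ((N : ℝ) + 1)) * ((N : ℝ) + 1)
            = ((N : ℝ) + 1) * (1 - α) + 1 := by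
          field_simp
        rw [hexp]
        linarith
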